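/- Let m ≥ 1 and let α : ℝ^m → (ℝ^m)* be a smooth map which is ℤ^m-periodic (α(x + p) = α(x) for all p ∈ ℤ^m) and closed, i.e. its derivative is symmetric: D_X(α(·)(Y))(x) = D_Y(α(·)(X))(x) for all x ∈ ℝ^m and X,Y ∈ ℝ^m. Then there exist a smooth ℤ^m-periodic function f : ℝ^m → ℝ and a constant linear form c ∈ (ℝ^m)* such that α(x) = Df(x) + c for all x ∈ ℝ^m. -/

import Mathlib

noncomputable section

open MeasureTheory intervalIntegral Metric Set ContinuousLinearMap

namespace CPOF

variable {m : ℕ}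

/-- Symmetry of the second derivative from closedness. -/
lemma symm_of_closed (α : (Fin m → ℝ) → ((Fin m → ℝ) →L[ℝ] ℝ))
    (hα : ContDiff ℝ (⊤ : ℕ∞) α)
    (hclosed : ∀ (x X Y : Fin m → ℝ),
      fderiv ℝ (fun q => α q Y) x X = fderiv ℝ (fun q => α q X) x Y)
    (x X Y : Fin m → ℝ) : fderiv ℝ α x X Y = fderiv ℝ α x Y X := by
  have key : ∀ Z W : Fin m → ℝ, fderiv ℝ (fun q => α q Z) x W = fderiv ℝ α x W Z := by
    intro Z W
    have hd : HasFDerivAt α (fderiv ℝ α x) x :=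
      ((hα.differentiable (by simp)) x).hasFDerivAt
    have h2 : HasFDerivAt (fun q => α q Z)
        ((ContinuousLinearMap.apply ℝ ℝ Z).comp (fderiv ℝ α x)) x :=
      (ContinuousLinearMap.apply ℝ ℝ Z).hasFDerivAt.comp x hd
    rw [h2.fderiv]; rfl
  have := hclosed x X Y
  rw [key Y X, key X Y] at this
  exact this

end CPOF

/-- Every smooth `ℤ^m`-periodic closed 1-form `α` on `ℝ^m` is the
differential of a smooth `ℤ^m`-periodic function plus a constant linear form. -/
theorem closed_periodic_one_form (m : ℕ) (hm : 1 ≤ m)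
    (α : (Fin m → ℝ) → ((Fin m → ℝ) →L[ℝ] ℝ))
    (hα : ContDiff ℝ (⊤ : ℕ∞) α)
    (hper : ∀ (x : Fin m → ℝ) (p : Fin m → ℤ), α (x + fun i => (p i : ℝ)) = α x)
    (hclosed : ∀ (x X Y : Fin m → ℝ),
      fderiv ℝ (fun q => α q Y) x X = fderiv ℝ (fun q => α q X) x Y) :
    ∃ (f : (Fin m → ℝ) → ℝ) (c : (Fin m → ℝ) →L[ℝ] ℝ),
      ContDiff ℝ (⊤ : ℕ∞) f ∧
      (∀ (x : Fin m → ℝ) (p : Fin m → ℤ), f (x + fun i => (p i : ℝ)) = f x) ∧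
      (∀ x, α x = fderiv ℝ f x + c) := by
  classical
  set E := Fin m → ℝ
  have hαd : Differentiable ℝ α := hα.differentiable (by simp)
  have hα' : Continuous (fderiv ℝ α) :=
    (hα.fderiv_right (m := 0) (by exact_mod_cast le_top)).continuous
  have hαc : Continuous α := hα.continuous
  -- the primitive
  set f : E → ℝ := fun x => ∫ t in (0:ℝ)..1, α (t • x) x with hf_def
  -- derivative of the integrand in x
  set F' : E → ℝ → (E →L[ℝ] ℝ) :=
    fun x t => α (t • x) + t • ((fderiv ℝ α (t • x)).flip x) with hF'_def
  have hF'cont : Continuous fun p : ℝ × E => F' p.2 p.1 := by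
    apply Continuous.add
    · exact hαc.comp (by fun_prop)
    · apply Continuous.smul continuous_fst
      have h1 : Continuous fun p : ℝ × E => (fderiv ℝ α (p.1 • p.2)).flip :=
        (ContinuousLinearMap.flipₗᵢ ℝ E E ℝ).continuous.comp (hα'.comp (by fun_prop))
      exact isBoundedBilinearMap_apply.continuous.comp (h1.prodMk continuous_snd)
  have hdiff : ∀ (t : ℝ) (x : E), HasFDerivAt (fun y => α (t • y) y) (F' x t) x := by
    intro t x
    have hc : HasFDerivAt (fun y : E => α (t • y)) (t • fderiv ℝ α (t • x)) x := by
      have hi : HasFDerivAt (fun y : E => t • y)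
          (t • ContinuousLinearMap.id ℝ E) x := (hasFDerivAt_id x).const_smul t
      have := ((hαd (t • x)).hasFDerivAt).comp x hi
      refine this.congr_fderiv ?_
      exact ContinuousLinearMap.ext fun v => by simp
    have := hc.clm_apply (hasFDerivAt_id x)
    refine this.congr_fderiv ?_
    exact ContinuousLinearMap.ext fun v => by simp [hF'_def]
  -- key: f has derivative α x at every x
  have hf : ∀ x : E, HasFDerivAt f (α x) x := by
    intro x₀
    -- bound on a compact set
    obtain ⟨C, hC⟩ := (isCompact_Icc.prod (isCompact_closedBall x₀ 1)).exists_bound_of_continuousOn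
      (s := Icc (0:ℝ) 1 ×ˢ closedBall x₀ 1) hF'cont.continuousOn
    have key : HasFDerivAt (fun x => ∫ t in (0:ℝ)..1, α (t • x) x)
        (∫ t in (0:ℝ)..1, F' x₀ t) x₀ := by
      apply intervalIntegral.hasFDerivAt_integral_of_dominated_of_fderiv_le
        (s := ball x₀ 1) (bound := fun _ => C) (ball_mem_nhds x₀ one_pos)
      · exact Filter.Eventually.of_forall fun x =>
          ((hαc.comp (by fun_prop)).clm_apply continuous_const).aestronglyMeasurable
      · exact ((hαc.comp (by fun_prop)).clm_apply continuous_const).intervalIntegrable 0 1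
      · exact (hF'cont.comp (continuous_id.prodMk continuous_const)).aestronglyMeasurable
      · refine Filter.Eventually.of_forall fun t ht x hx => ?_
        refine hC (t, x) ?_
        rw [Set.uIoc_of_le (by norm_num : (0:ℝ) ≤ 1)] at ht
        exact ⟨⟨le_of_lt ht.1, ht.2⟩, ball_subset_closedBall hx⟩
      · exact intervalIntegrable_const
      · exact Filter.Eventually.of_forall fun t ht x hx => hdiff t x
    have : (∫ t in (0:ℝ)..1, F' x₀ t) = α x₀ := by
      have hint : IntervalIntegrable (F' x₀) volume 0 1 :=
        (hF'cont.comp (continuous_id.prodMk continuous_const)).intervalIntegrable 0 1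
      ext v
      rw [ContinuousLinearMap.intervalIntegral_apply hint v]
      have hg : ∀ t ∈ Set.uIcc (0:ℝ) 1, HasDerivAt (fun t => t * α (t • x₀) v)
          ((F' x₀ t) v) t := by
        intro t _
        have h1 : HasDerivAt (fun t : ℝ => α (t • x₀)) (fderiv ℝ α (t • x₀) x₀) t := by
          have hc : HasDerivAt (fun t : ℝ => t • x₀) x₀ t := by
            simpa using (hasDerivAt_id t).smul_const x₀
          exact (hαd (t • x₀)).hasFDerivAt.comp_hasDerivAt t hc
        have h2 : HasDerivAt (fun t : ℝ => α (t • x₀) v)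
            (fderiv ℝ α (t • x₀) x₀ v) t := by
          have := h1.clm_apply (hasDerivAt_const t v)
          simpa using this
        have h3 := (hasDerivAt_id t).mul h2
        have : (F' x₀ t) v = 1 * α (t • x₀) v + t * fderiv ℝ α (t • x₀) x₀ v := by
          rw [hF'_def]
          simp only [ContinuousLinearMap.add_apply, ContinuousLinearMap.smul_apply,
            ContinuousLinearMap.flip_apply, one_mul, smul_eq_mul]
          rw [CPOF.symm_of_closed α hα hclosed (t • x₀) v x₀]
        rw [this]
        exact h3
      have hcont2 : Continuous fun t => (F' x₀ t) v :=
        (hF'cont.comp (continuous_id.prodMk continuous_const)).clm_apply continuous_const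
      have := intervalIntegral.integral_eq_sub_of_hasDerivAt hg
        (hcont2.intervalIntegrable 0 1)
      rw [this]
      simp
    rw [this] at key
    exact key
  have hfd : Differentiable ℝ f := fun x => (hf x).differentiableAt
  have hdf : fderiv ℝ f = α := funext fun x => (hf x).fderiv
  have hfsmooth : ContDiff ℝ (⊤ : ℕ∞) f :=
    contDiff_infty_iff_fderiv.mpr ⟨hfd, hdf ▸ hα⟩
  -- periods
  have hconst : ∀ (p : Fin m → ℤ) (x : E),
      f (x + fun i => (p i : ℝ)) - f x = f (fun i => (p i : ℝ)) - f 0 := by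
    intro p
    set P : E := fun i => (p i : ℝ) with hP
    have hg : ∀ x : E, HasFDerivAt (fun x => f (x + P) - f x) (0 : E →L[ℝ] ℝ) x := by
      intro x
      have h1 : HasFDerivAt (fun y : E => y + P) (ContinuousLinearMap.id ℝ E) x :=
        (hasFDerivAt_id x).add_const P
      have h2 := ((hf (x + P)).comp x h1).sub (hf x)
      have hx : α (x + P) = α x := hper x p
      rw [hx] at h2
      exact h2.congr_fderiv (by simp)
    intro x
    have := is_const_of_fderiv_eq_zero (𝕜 := ℝ) (f := fun x : E => f (x + P) - f x)
      (fun x => (hg x).differentiableAt) (fun x => (hg x).fderiv) x 0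
    simpa using this
  -- the period homomorphism
  have hAadd : ∀ p q : Fin m → ℤ,
      (f (fun i => ((p + q) i : ℝ)) - f 0) =
        (f (fun i => (p i : ℝ)) - f 0) + (f (fun i => (q i : ℝ)) - f 0) := by
    intro p q
    have hcast : (fun i => ((p + q) i : ℝ)) =
        (fun i => (q i : ℝ)) + fun i => (p i : ℝ) := by
      funext i; simp [add_comm]
    have h1 := hconst p (fun i => (q i : ℝ))
    rw [hcast]
    linarith
  set φ : (Fin m → ℤ) →+ ℝ :=
    AddMonoidHom.mk' (fun p => f (fun i => (p i : ℝ)) - f 0) hAadd with hφ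
  have hφp : ∀ p : Fin m → ℤ, φ p = f (fun i => (p i : ℝ)) - f 0 := fun p => rfl
  have hφval : ∀ p : Fin m → ℤ, φ p = ∑ i, (p i : ℝ) * φ ((Pi.single i 1 : Fin m → ℤ)) := by
    intro p
    have hp : p = ∑ i, Pi.single i (p i) := by
      funext j
      simp [Finset.sum_apply, Pi.single_apply]
    conv_lhs => rw [hp]
    rw [map_sum]
    congr 1
    funext i
    have h4 : Pi.single i (p i) = (p i) • (Pi.single i 1 : Fin m → ℤ) := by
      funext j
      by_cases h : j = i <;> simp [Pi.single_apply, h]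
    rw [h4, map_zsmul]
    simp [zsmul_eq_mul]
  set c : E →L[ℝ] ℝ :=
    ∑ i, φ ((Pi.single i 1 : Fin m → ℤ)) •
      (ContinuousLinearMap.proj (R := ℝ) (φ := fun _ : Fin m => ℝ) i) with hc
  have hcP : ∀ p : Fin m → ℤ, c (fun i => (p i : ℝ)) = φ p := by
    intro p
    rw [hφval p, hc]
    simp only [ContinuousLinearMap.sum_apply, ContinuousLinearMap.smul_apply,
      ContinuousLinearMap.proj_apply, smul_eq_mul]
    exact Finset.sum_congr rfl fun i _ => mul_comm _ _
  refine ⟨fun x => f x - c x, c, hfsmooth.sub c.contDiff, ?_, ?_⟩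
  · intro x p
    show f (x + fun i => (p i : ℝ)) - c (x + fun i => (p i : ℝ)) = f x - c x
    have h1 := hconst p x
    have h2 : c (x + fun i => (p i : ℝ)) = c x + c (fun i => (p i : ℝ)) := map_add c x _
    have h3 := hφp p
    have h4 := hcP p
    rw [h2]
    linarith
  · intro x
    have hg : HasFDerivAt (fun x => f x - c x) (α x - c) x := (hf x).sub c.hasFDerivAt
    rw [hg.fderiv]
    abel
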